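/- arXiv:2207.11959 — 2 statements merged into one kernel-verified Lean document; each statement's English description precedes it below -/
import Mathlib

section
/- If λ is a Mahlo cardinal, then for every μ < λ the Laver collapse L(κ,λ) has the (λ,λ,<μ)-chain condition: for every family {p_α : α < λ} of conditions there is a subfamily of size λ all of whose subsets of size < μ have lower bounds. -/
noncomputable section

/-- A collapse condition is coded as a set of triples `(γ, i, β)`, meaning `p(γ)(i) = β`. -/
abbrev STriple : Type 1 := Cardinal × Ordinal × Ordinal

/-- The domain of such a coded condition: the coordinates mentioned. -/
def silDom (p : Set STriple) : Set Cardinal := {γ | ∃ t ∈ p, t.1 = γ}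

/-- A set `d` of cardinals is an Easton subset of `λ`: for every regular `α ≤ λ`,
`sup (d ∩ α) < α`. -/
def EastonC (lam : Cardinal) (d : Set Cardinal) : Prop :=
  ∀ c : Cardinal, c.IsRegular → c ≤ lam → ∃ β < c, ∀ γ ∈ d, γ < c → γ ≤ β

/-- `p` is a condition of the Laver collapse `L(κ, λ)`: a function on an Easton set of
fewer than `λ` many regular cardinals `γ` with `κ < γ < λ`, each `p(γ)` a partial
function from `κ` to `γ`, all domains `dom p(γ)` uniformly bounded by some `ξ < κ`.
The order is reverse inclusion. -/
def IsLaverCond (κ lam : Cardinal) (p : Set STriple) : Prop :=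
  (∀ t ∈ p, t.1.IsRegular ∧ κ < t.1 ∧ t.1 < lam ∧ t.2.1 < κ.ord ∧ t.2.2 < t.1.ord) ∧
  (∀ t ∈ p, ∀ s ∈ p, t.1 = s.1 → t.2.1 = s.2.1 → t.2.2 = s.2.2) ∧
  Cardinal.mk (silDom p) < Cardinal.lift.{1} lam ∧
  EastonC lam (silDom p) ∧
  (∃ ξ < κ.ord, ∀ t ∈ p, t.2.1 < ξ)

end
/-- An inaccessible cardinal: uncountable, regular, strong limit. -/
def IsInacc (c : Cardinal) : Prop :=
  Cardinal.aleph0 < c ∧ c.IsRegular ∧ c.IsStrongLimit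

/-- `C` is club in `δ`: a subset of `δ`, unbounded in `δ`, and closed: every nonzero
`a < δ` which is a limit of elements of `C` belongs to `C`. -/
def IsClubIn (C : Set Ordinal) (δ : Ordinal) : Prop :=
  C ⊆ Set.Iio δ ∧ (∀ a < δ, ∃ b ∈ C, a < b) ∧
  ∀ a < δ, 0 < a → (∀ b < a, ∃ c ∈ C, b < c ∧ c < a) → a ∈ C

/-- A Mahlo cardinal: inaccessible, and every club in it contains an inaccessible. -/
def IsMahlo (c : Cardinal) : Prop :=
  IsInacc c ∧ ∀ C : Set Ordinal, IsClubIn C c.ord →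
    ∃ r : Cardinal, IsInacc r ∧ r.ord ∈ C

noncomputable section AuxLemmas
open Cardinal Ordinal Set

/-- The ordinal position of an element of `o.ToType`. -/
def otio (o : Ordinal.{0}) (i : o.ToType) : Ordinal :=
  ((Ordinal.ToType.mk (o := o)).symm i : Ordinal)

theorem otio_lt {o : Ordinal.{0}} (i : o.ToType) : otio o i < o :=
  ((Ordinal.ToType.mk (o := o)).symm i).2

theorem otio_inj {o : Ordinal.{0}} {i j : o.ToType} (h : otio o i = otio o j) : i = j := by
  have := (Ordinal.ToType.mk (o := o)).symm.injective (Subtype.ext h)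
  exact this

theorem otio_enum {o : Ordinal.{0}} (a : Ordinal) (h : a < o) :
    otio o ((Ordinal.ToType.mk (o := o)) ⟨a, h⟩) = a := by
  unfold otio
  rw [OrderIso.symm_apply_apply]

theorem otio_strictMono {o : Ordinal.{0}} {i j : o.ToType} (h : i < j) : otio o i < otio o j := by
  have : (Ordinal.ToType.mk (o := o)).symm i < (Ordinal.ToType.mk (o := o)).symm j :=
    (Ordinal.ToType.mk (o := o)).symm.strictMono h
  exact this

/-- A small subset of `lam.ord.ToType` is bounded. -/
theorem bounded_small {lam : Cardinal.{0}} (hreg : lam.IsRegular)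
    (T : Set lam.ord.ToType) (hT : Cardinal.mk T < lam) :
    ∃ b < lam.ord, ∀ i ∈ T, otio lam.ord i < b := by
  have holim : Order.IsSuccLimit lam.ord := Cardinal.isSuccLimit_ord hreg.aleph0_le
  have hsup : (⨆ i : T, otio lam.ord i.1) < lam.ord := by
    apply Ordinal.iSup_lt_ord
    · rwa [hreg.cof_eq]
    · exact fun i => otio_lt _
  refine ⟨(⨆ i : T, otio lam.ord i.1) + 1, ?_, ?_⟩
  · rw [Ordinal.add_one_eq_succ]; exact holim.succ_lt hsup
  · intro i hi
    have : otio lam.ord i ≤ ⨆ i : T, otio lam.ord i.1 :=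
      le_ciSup (Ordinal.bddAbove_range _) (⟨i, hi⟩ : T)
    rw [Ordinal.add_one_eq_succ]
    exact lt_of_le_of_lt this (Order.lt_succ _)

/-- A small set of cardinals below `lam` is bounded below `lam.ord`. -/
theorem card_small_bound {lam : Cardinal.{0}} (hreg : lam.IsRegular)
    (S : Set Cardinal.{0}) (hS : Cardinal.mk S < Cardinal.lift.{1} lam)
    (hlt : ∀ γ ∈ S, γ < lam) : ∃ b < lam.ord, ∀ γ ∈ S, γ.ord < b := by
  classical
  set T : Set lam.ord.ToType := {i | ∃ γ ∈ S, γ.ord = otio lam.ord i} with hTdef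
  have hTS : Cardinal.mk T < lam := by
    have key : Cardinal.mk (ULift.{1} T) < Cardinal.lift.{1} lam → Cardinal.mk T < lam := by
      rw [Cardinal.mk_uLift]
      exact Cardinal.lift_lt.1
    apply key
    have hinj : ∃ f : ULift.{1} T → S, Function.Injective f := by
      refine ⟨fun x => ⟨x.down.2.choose, x.down.2.choose_spec.1⟩, ?_⟩
      intro x y h
      have h1 : x.down.2.choose = y.down.2.choose := congrArg Subtype.val h
      have hx := x.down.2.choose_spec.2
      have hy := y.down.2.choose_spec.2
      have : otio lam.ord x.down.1 = otio lam.ord y.down.1 := by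
        rw [← hx, ← hy, h1]
      have h2 := otio_inj this
      have h3 : x.down = y.down := Subtype.ext h2
      cases x; cases y; cases h3; rfl
    obtain ⟨f, hf⟩ := hinj
    exact lt_of_le_of_lt (Cardinal.mk_le_of_injective hf) hS
  clear_value T
  obtain ⟨b, hb, hbd⟩ := bounded_small hreg T hTS
  refine ⟨b, hb, ?_⟩
  intro γ hγ
  have hγo : γ.ord < lam.ord := Cardinal.ord_lt_ord.2 (hlt γ hγ)
  have hmem : ((Ordinal.ToType.mk (o := lam.ord)) ⟨γ.ord, hγo⟩) ∈ T := by
    rw [hTdef]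
    exact ⟨γ, hγ, (otio_enum _ _).symm⟩
  have := hbd _ hmem
  rwa [otio_enum] at this

/-- The set of closure points (above a tail) of a function is club. -/
theorem clubset_isClub {lam : Cardinal.{0}} (h0 : Cardinal.aleph0 < lam)
    (hreg : lam.IsRegular) {b : Ordinal} (hb : b < lam.ord)
    {F : Ordinal → Ordinal} (hF : ∀ x < lam.ord, F x < lam.ord) :
    IsClubIn {x | x < lam.ord ∧ b < x ∧ ∀ y < x, F y < x} lam.ord := by
  have holim : Order.IsSuccLimit lam.ord := Cardinal.isSuccLimit_ord hreg.aleph0_le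
  refine ⟨fun x hx => hx.1, ?_, ?_⟩
  · -- unbounded
    intro a ha
    -- iterate
    let g : ℕ → Ordinal := fun n => Nat.rec (max a b + 1)
      (fun _ gn => max (gn + 1) ((⨆ j : gn.ToType, F (otio gn j)) + 1)) n
    have hg0 : g 0 = max a b + 1 := rfl
    have hgs : ∀ n, g (n + 1) = max (g n + 1) ((⨆ j : (g n).ToType, F (otio (g n) j)) + 1) :=
      fun n => rfl
    have hglt : ∀ n, g n < lam.ord := by
      intro n; induction n with
      | zero =>
        rw [hg0, Ordinal.add_one_eq_succ]
        exact holim.succ_lt (max_lt ha hb)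
      | succ n ih =>
        rw [hgs n]
        apply max_lt
        · rw [Ordinal.add_one_eq_succ]; exact holim.succ_lt ih
        · rw [Ordinal.add_one_eq_succ]
          apply holim.succ_lt
          apply Ordinal.iSup_lt_ord
          · rw [hreg.cof_eq, Cardinal.mk_toType]
            exact Cardinal.lt_ord.1 ih
          · intro j
            exact hF _ (lt_trans (otio_lt j) ih)
    have hmono : ∀ n, g n < g (n + 1) := by
      intro n
      rw [hgs n]
      exact lt_of_lt_of_le (by rw [Ordinal.add_one_eq_succ]; exact Order.lt_succ _)
        (le_max_left _ _)
    set c := ⨆ n, g n with hc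
    have hglec : ∀ n, g n ≤ c := fun n => le_ciSup (Ordinal.bddAbove_range g) n
    have hclt : c < lam.ord := by
      apply Ordinal.iSup_lt_ord
      · rw [hreg.cof_eq, Cardinal.mk_denumerable]
        exact h0
      · exact hglt
    have hac : a < c := lt_of_lt_of_le (lt_of_le_of_lt (le_max_left a b)
      (by rw [hg0, Ordinal.add_one_eq_succ]; exact Order.lt_succ _) : a < g 0) (hglec 0)
    have hlift : ∀ y < c, ∃ n, y < g n := by
      intro y hy
      by_contra hcon
      push_neg at hcon
      exact absurd (Ordinal.iSup_le hcon : c ≤ y) (not_le.2 hy)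
    refine ⟨c, ⟨hclt, ?_, ?_⟩, hac⟩
    · exact lt_of_lt_of_le (lt_of_le_of_lt (le_max_right a b)
        (by rw [hg0, Ordinal.add_one_eq_succ]; exact Order.lt_succ _)) (hglec 0)
    · intro y hy
      obtain ⟨n, hn⟩ := hlift y hy
      have h1 : F y ≤ ⨆ j : (g n).ToType, F (otio (g n) j) := by
        have := le_ciSup (Ordinal.bddAbove_range (fun j : (g n).ToType => F (otio (g n) j)))
          ((Ordinal.ToType.mk (o := (g n))) ⟨y, hn⟩)
        rwa [otio_enum] at this
      have h2 : F y < g (n + 1) := by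
        rw [hgs n]
        refine lt_of_le_of_lt h1 (lt_of_lt_of_le ?_ (le_max_right _ _))
        rw [Ordinal.add_one_eq_succ]; exact Order.lt_succ _
      exact lt_of_lt_of_le h2 (hglec (n + 1))
  · -- closed
    intro a ha hapos hlim
    refine ⟨ha, ?_, ?_⟩
    · obtain ⟨c', hc', h0c, hc'a⟩ := hlim 0 hapos
      exact lt_trans hc'.2.1 hc'a
    · intro y hy
      obtain ⟨c', hc', hyc', hc'a⟩ := hlim y hy
      exact lt_trans (hc'.2.2 y hyc') hc'a

/-- A regular-cardinal pigeonhole principle. -/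
theorem pigeonhole {α β : Type} (f : α → β) {c : Cardinal.{0}} (hc : c.IsRegular)
    (hca : c ≤ Cardinal.mk α) (hβ : Cardinal.mk β < c) :
    ∃ v : β, c ≤ Cardinal.mk {a // f a = v} := by
  by_contra h
  push_neg at h
  have heq : Cardinal.mk α = Cardinal.sum fun v : β => Cardinal.mk {a // f a = v} := by
    rw [← Cardinal.mk_sigma]
    exact (Cardinal.mk_congr (Equiv.sigmaFiberEquiv f)).symm
  have := Cardinal.sum_lt_of_isRegular hc hβ h
  rw [← heq] at this
  exact absurd hca (not_le.2 this)

end AuxLemmas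

/-- If `λ` is Mahlo, then for every `μ < λ` the Laver collapse `L(κ,λ)` has the
`(λ,λ,<μ)`-chain condition: every λ-indexed family of conditions has a λ-sized
subfamily all of whose subsets of size `< μ` have a common lower bound. -/
theorem stmt12 (κ lam μ : Cardinal.{0}) (hκ : κ.IsRegular) (hκlam : κ < lam)
    (hM : IsMahlo lam) (hμ : μ < lam)
    (p : lam.ord.ToType → Set STriple) (hp : ∀ i, IsLaverCond κ lam (p i)) :
    ∃ Z : Set lam.ord.ToType, Cardinal.mk Z = lam ∧
      ∀ s ⊆ Z, Cardinal.mk s < μ →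
        ∃ r : Set STriple, IsLaverCond κ lam r ∧ ∀ i ∈ s, p i ⊆ r := by
  classical
  obtain ⟨⟨h0, hreg, hsl⟩, hMahlo⟩ := hM
  have holim : Order.IsSuccLimit lam.ord := Cardinal.isSuccLimit_ord hreg.aleph0_le
  have hκ0 : (0 : Ordinal) < κ.ord := by
    rw [Cardinal.lt_ord]; simpa using hκ.pos
  -- bounds on the domains
  have hd1 : ∀ i, ∀ γ ∈ silDom (p i), γ < lam := by
    intro i γ hγ
    obtain ⟨tr, htr, h1⟩ := hγ
    have := ((hp i).1 tr htr).2.2.1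
    rwa [h1] at this
  have hB : ∀ i : lam.ord.ToType, ∃ b < lam.ord, ∀ γ ∈ silDom (p i), γ.ord < b :=
    fun i => card_small_bound hreg _ (hp i).2.2.1 (hd1 i)
  choose B hBlt hBd using hB
  set F₀ : Ordinal → Ordinal := fun a =>
    if h : a < lam.ord then B ((Ordinal.ToType.mk (o := lam.ord)) ⟨a, h⟩) else 0 with hF₀def
  have hF₀lt : ∀ x < lam.ord, F₀ x < lam.ord := by
    intro x hx
    rw [hF₀def]
    simp only [hx, dif_pos]
    exact hBlt _
  have hF₀ti : ∀ i, F₀ (otio lam.ord i) = B i := by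
    intro i
    have h := otio_lt (o := lam.ord) i
    rw [hF₀def]
    simp only [h, dif_pos]
    congr 1
    have h2 : (⟨otio lam.ord i, h⟩ : Set.Iio lam.ord) = (Ordinal.ToType.mk (o := lam.ord)).symm i :=
      Subtype.ext rfl
    rw [h2, OrderIso.apply_symm_apply]
  set b₀ : Ordinal := max κ.ord μ.ord with hb₀def
  have hb₀ : b₀ < lam.ord := max_lt (Cardinal.ord_lt_ord.2 hκlam) (Cardinal.ord_lt_ord.2 hμ)
  set P : lam.ord.ToType → Prop := fun i =>
    (∃ rr : Cardinal, IsInacc rr ∧ rr.ord = otio lam.ord i) ∧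
    (otio lam.ord i < lam.ord ∧ b₀ < otio lam.ord i ∧
      ∀ y < otio lam.ord i, F₀ y < otio lam.ord i) with hPdef
  have hG0 : ∀ i, P i → ∃ g, g < otio lam.ord i ∧
      ∀ γ ∈ silDom (p i), γ.ord < otio lam.ord i → γ.ord ≤ g := by
    intro i hPi
    obtain ⟨rr, hrrI, hrr⟩ := hPi.1
    have hrlam : rr ≤ lam := by
      have h1 : rr.ord < lam.ord := by rw [hrr]; exact otio_lt i
      exact le_of_lt (Cardinal.ord_lt_ord.1 h1)
    obtain ⟨β, hβ, hbd⟩ := (hp i).2.2.2.1 rr hrrI.2.1 hrlam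
    refine ⟨β.ord, by rw [← hrr]; exact Cardinal.ord_lt_ord.2 hβ, ?_⟩
    intro γ hγ hγlt
    have hγrr : γ < rr := Cardinal.ord_lt_ord.1 (by rw [hrr]; exact hγlt)
    exact Cardinal.ord_le_ord.2 (hbd γ hγ hγrr)
  choose! G hGlt hGbd using hG0
  -- weak Fodor
  have hWF : ∃ ν < lam.ord, lam ≤ Cardinal.mk {i | P i ∧ G i ≤ ν} := by
    by_contra hcon
    push_neg at hcon
    have hsm : ∀ ν, ν < lam.ord →
        ∃ b < lam.ord, ∀ i ∈ {i | P i ∧ G i ≤ ν}, otio lam.ord i < b :=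
      fun ν hν => bounded_small hreg _ (hcon ν hν)
    choose Fc hFc1 hFc2 using hsm
    set F₁ : Ordinal → Ordinal := fun ν => if h : ν < lam.ord then Fc ν h else 0 with hF₁def
    have hFm : ∀ x < lam.ord, max (F₀ x) (F₁ x) < lam.ord := by
      intro x hx
      refine max_lt (hF₀lt x hx) ?_
      rw [hF₁def]
      simp only [hx, dif_pos]
      exact hFc1 x hx
    have hclub := clubset_isClub h0 hreg hb₀ hFm
    obtain ⟨rr, hrrI, hrrmem⟩ := hMahlo _ hclub
    obtain ⟨hm1, hm2, hm3⟩ := hrrmem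
    set i := (Ordinal.ToType.mk (o := lam.ord)) ⟨rr.ord, hm1⟩ with hidef
    have htieq : otio lam.ord i = rr.ord := otio_enum _ _
    have hPi : P i := by
      rw [hPdef]
      refine ⟨⟨rr, hrrI, htieq.symm⟩, ?_, ?_, ?_⟩ <;> rw [htieq]
      · exact hm1
      · exact hm2
      · intro y hy
        exact lt_of_le_of_lt (le_max_left _ _) (hm3 y hy)
    have hGi := hGlt i hPi
    have hGio : G i < lam.ord := lt_trans hGi (otio_lt i)
    have h1 : otio lam.ord i < F₁ (G i) := by
      rw [hF₁def]
      simp only [hGio, dif_pos]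
      exact hFc2 (G i) hGio i ⟨hPi, le_refl _⟩
    have h2 : F₁ (G i) < otio lam.ord i := by
      have h3 := hm3 (G i) (by rw [← htieq]; exact hGi)
      rw [htieq]
      exact lt_of_le_of_lt (le_max_right _ _) h3
    exact absurd (lt_trans h1 h2) (lt_irrefl _)
  obtain ⟨ν₁, hν₁, hS₁⟩ := hWF
  have hν₁s : ν₁ + 1 < lam.ord := by
    rw [Ordinal.add_one_eq_succ]; exact holim.succ_lt hν₁
  have hν₁lt : ν₁ < ν₁ + 1 := by
    rw [Ordinal.add_one_eq_succ]; exact Order.lt_succ _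
  -- coding
  set en1 : Ordinal → (ν₁ + 1).ToType := fun x =>
    (Ordinal.ToType.mk (o := (ν₁ + 1))) ⟨min x ν₁, lt_of_le_of_lt (min_le_right _ _) hν₁lt⟩
    with hen1def
  have hen1 : ∀ x ≤ ν₁, ∀ y ≤ ν₁, en1 x = en1 y → x = y := by
    intro x hx y hy h
    rw [hen1def] at h
    have h1 := (Ordinal.ToType.mk (o := (ν₁ + 1))).injective h
    have h2 := congrArg Subtype.val h1
    simpa [min_eq_left hx, min_eq_left hy] using h2
  set en2 : Ordinal → κ.ord.ToType := fun x =>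
    if h : x < κ.ord then (Ordinal.ToType.mk (o := κ.ord)) ⟨x, h⟩
    else (Ordinal.ToType.mk (o := κ.ord)) ⟨0, hκ0⟩ with hen2def
  have hen2 : ∀ x < κ.ord, ∀ y < κ.ord, en2 x = en2 y → x = y := by
    intro x hx y hy h
    rw [hen2def] at h
    simp only [hx, hy, dif_pos] at h
    have h1 := (Ordinal.ToType.mk (o := κ.ord)).injective h
    exact congrArg Subtype.val h1
  set Low : Set STriple := {tr | tr.1.ord ≤ ν₁} with hLowdef
  have hLowmem : ∀ tr : STriple, tr ∈ Low ↔ tr.1.ord ≤ ν₁ := by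
    intro tr; rw [hLowdef]; exact Iff.rfl
  set cd : STriple → ((ν₁ + 1).ToType × κ.ord.ToType × (ν₁ + 1).ToType) := fun tr =>
    (en1 tr.1.ord, en2 tr.2.1, en1 tr.2.2) with hcddef
  have hcdinj : ∀ i j : lam.ord.ToType, ∀ tr ∈ p i ∩ Low, ∀ sr ∈ p j ∩ Low,
      cd tr = cd sr → tr = sr := by
    intro i j tr htr sr hsr h
    rw [hcddef] at h
    have h1 : en1 tr.1.ord = en1 sr.1.ord := congrArg Prod.fst h
    have h23 := congrArg Prod.snd h
    have h2 : en2 tr.2.1 = en2 sr.2.1 := congrArg Prod.fst h23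
    have h3 : en1 tr.2.2 = en1 sr.2.2 := congrArg Prod.snd h23
    have htrp := (hp i).1 tr htr.1
    have hsrp := (hp j).1 sr hsr.1
    have htrl := (hLowmem tr).1 htr.2
    have hsrl := (hLowmem sr).1 hsr.2
    have e1 : tr.1 = sr.1 := Cardinal.ord_injective (hen1 _ htrl _ hsrl h1)
    have e2 : tr.2.1 = sr.2.1 := hen2 _ htrp.2.2.2.1 _ hsrp.2.2.2.1 h2
    have e3 : tr.2.2 = sr.2.2 := hen1 _ (le_trans (le_of_lt htrp.2.2.2.2) htrl)
      _ (le_trans (le_of_lt hsrp.2.2.2.2) hsrl) h3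
    exact Prod.ext e1 (Prod.ext e2 e3)
  choose ξf hξf1 hξf2 using fun i => (hp i).2.2.2.2
  set V : lam.ord.ToType →
      (Set ((ν₁ + 1).ToType × κ.ord.ToType × (ν₁ + 1).ToType) × κ.ord.ToType) :=
    fun i => (cd '' (p i ∩ Low), en2 (ξf i)) with hVdef
  have hcodom : Cardinal.mk
      (Set ((ν₁ + 1).ToType × κ.ord.ToType × (ν₁ + 1).ToType) × κ.ord.ToType) < lam := by
    have hA : Cardinal.mk ((ν₁ + 1).ToType) < lam := by
      rw [Cardinal.mk_toType]; exact Cardinal.lt_ord.1 hν₁s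
    have hBt : Cardinal.mk (κ.ord.ToType) < lam := by
      rw [Cardinal.mk_ord_toType]; exact hκlam
    have hprod : Cardinal.mk ((ν₁ + 1).ToType × κ.ord.ToType × (ν₁ + 1).ToType) < lam := by
      simp only [Cardinal.mk_prod, Cardinal.lift_id]
      exact Cardinal.mul_lt_of_lt hreg.aleph0_le hA
        (Cardinal.mul_lt_of_lt hreg.aleph0_le hBt hA)
    simp only [Cardinal.mk_prod, Cardinal.mk_set, Cardinal.lift_id]
    exact Cardinal.mul_lt_of_lt hreg.aleph0_le (hsl.two_power_lt hprod) hBt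
  obtain ⟨v, hv⟩ := pigeonhole (fun a : {i | P i ∧ G i ≤ ν₁} => V a.1) hreg hS₁ hcodom
  set Z : Set lam.ord.ToType := {i | (P i ∧ G i ≤ ν₁) ∧ V i = v} with hZdef
  have hZle : Cardinal.mk Z ≤ lam :=
    le_trans (Cardinal.mk_set_le _) (le_of_eq (Cardinal.mk_ord_toType lam))
  have hZge : lam ≤ Cardinal.mk Z := by
    refine le_trans hv (Cardinal.mk_le_of_injective
      (f := fun a : {a : {i | P i ∧ G i ≤ ν₁} // V a.1 = v} =>
        (⟨a.1.1, ⟨a.1.2, a.2⟩⟩ : Z)) ?_)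
    intro x y h
    have h1 : x.1.1 = y.1.1 := congrArg (fun z : Z => z.1) h
    exact Subtype.ext (Subtype.ext h1)
  refine ⟨Z, le_antisymm hZle hZge, ?_⟩
  intro s hsZ hscard
  rcases Set.eq_empty_or_nonempty s with hemp | ⟨i₀, hi₀⟩
  · have hsil : silDom (∅ : Set STriple) = ∅ := by
      ext γ
      simp [silDom]
    refine ⟨∅, ⟨?_, ?_, ?_, ?_, ?_⟩, ?_⟩
    · intro tr htr; exact absurd htr (Set.notMem_empty tr)
    · intro tr htr; exact absurd htr (Set.notMem_empty tr)
    · rw [hsil, Cardinal.mk_emptyCollection]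
      calc (0 : Cardinal.{1}) = Cardinal.lift.{1} 0 := (Cardinal.lift_zero).symm
        _ < Cardinal.lift.{1} lam := Cardinal.lift_lt.2 hreg.pos
    · intro c hc hcl
      refine ⟨0, hc.pos, ?_⟩
      intro γ hγ
      rw [hsil] at hγ
      exact absurd hγ (Set.notMem_empty γ)
    · exact ⟨0, hκ0, fun tr htr => absurd htr (Set.notMem_empty tr)⟩
    · intro i hi
      rw [hemp] at hi
      exact absurd hi (Set.notMem_empty i)
  · set r : Set STriple := {tr | ∃ i ∈ s, tr ∈ p i} with hrdef
    have hmemZ : ∀ i ∈ s, (P i ∧ G i ≤ ν₁) ∧ V i = v := by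
      intro i hi
      have := hsZ hi
      rw [hZdef] at this
      exact this
    have himgkey : ∀ i' j' : lam.ord.ToType, cd '' (p i' ∩ Low) = cd '' (p j' ∩ Low) →
        p i' ∩ Low ⊆ p j' ∩ Low := by
      intro i' j' h tr htr
      have h1 : cd tr ∈ cd '' (p j' ∩ Low) := h ▸ Set.mem_image_of_mem cd htr
      obtain ⟨sr, hsr, hcs⟩ := h1
      have h2 := hcdinj j' i' sr hsr tr htr hcs
      rwa [← h2]
    have hLoweqv : ∀ i ∈ s, ∀ j ∈ s, p i ∩ Low = p j ∩ Low := by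
      intro i hi j hj
      have himg : cd '' (p i ∩ Low) = cd '' (p j ∩ Low) := by
        have h1 := congrArg Prod.fst (hmemZ i hi).2
        have h2 := congrArg Prod.fst (hmemZ j hj).2
        rw [hVdef] at h1 h2
        rw [show (fun i => (cd '' (p i ∩ Low), en2 (ξf i))) i = (cd '' (p i ∩ Low), en2 (ξf i)) from rfl] at h1
        exact h1.trans h2.symm
      exact Set.Subset.antisymm (himgkey i j himg) (himgkey j i himg.symm)
    have hC2 : ∀ i ∈ s, ∀ γ ∈ silDom (p i), γ.ord < otio lam.ord i → γ.ord ≤ ν₁ := by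
      intro i hi γ hγ hlt
      exact le_trans (hGbd i (hmemZ i hi).1.1 γ hγ hlt) (hmemZ i hi).1.2
    have hC1 : ∀ i, ∀ γ ∈ silDom (p i), γ.ord < F₀ (otio lam.ord i) := by
      intro i γ hγ
      rw [hF₀ti i]
      exact hBd i γ hγ
    have hclos : ∀ j ∈ s, ∀ y < otio lam.ord j, F₀ y < otio lam.ord j := by
      intro j hj
      exact ((hmemZ j hj).1.1).2.2.2
    have hC3 : ∀ i ∈ s, ∀ j ∈ s, ∀ tr ∈ p i, tr.1.ord ≤ ν₁ → tr ∈ p j := by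
      intro i hi j hj tr htr hlow
      have h1 : tr ∈ p i ∩ Low := ⟨htr, (hLowmem tr).2 hlow⟩
      rw [hLoweqv i hi j hj] at h1
      exact h1.1
    have hkey : ∀ i ∈ s, ∀ j ∈ s, otio lam.ord i < otio lam.ord j →
        ∀ tr ∈ p i, tr.1 ∈ silDom (p j) → tr ∈ p j := by
      intro i hi j hj hij tr htr hdj
      have h1 : tr.1.ord < F₀ (otio lam.ord i) := hC1 i tr.1 ⟨tr, htr, rfl⟩
      have h2 : F₀ (otio lam.ord i) < otio lam.ord j := hclos j hj (otio lam.ord i) hij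
      have h3 : tr.1.ord ≤ ν₁ := hC2 j hj tr.1 hdj (lt_trans h1 h2)
      exact hC3 i hi j hj tr htr h3
    refine ⟨r, ⟨?_, ?_, ?_, ?_, ?_⟩, fun i hi tr htr => ⟨i, hi, htr⟩⟩
    · rintro tr ⟨i, hi, htri⟩
      exact (hp i).1 tr htri
    · rintro tr ⟨i, hi, htri⟩ sr ⟨j, hj, hsrj⟩ h1 h21
      by_cases hij : i = j
      · subst hij
        exact (hp i).2.1 tr htri sr hsrj h1 h21
      · have hne : otio lam.ord i ≠ otio lam.ord j := fun h => hij (otio_inj h)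
        rcases lt_or_gt_of_ne hne with hlt | hgt
        · have htrj : tr ∈ p j := hkey i hi j hj hlt tr htri ⟨sr, hsrj, h1.symm⟩
          exact (hp j).2.1 tr htrj sr hsrj h1 h21
        · have hsri : sr ∈ p i := hkey j hj i hi hgt sr hsrj ⟨tr, htri, h1⟩
          exact (hp i).2.1 tr htri sr hsri h1 h21
    · have hslam : Cardinal.mk s < lam := lt_trans hscard hμ
      set βs := ⨆ i : s, F₀ (otio lam.ord i.1) with hβs
      have hsupb : βs < lam.ord := by
        rw [hβs]
        apply Ordinal.iSup_lt_ord
        · rw [hreg.cof_eq]; exact hslam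
        · intro i; exact hF₀lt _ (otio_lt _)
      have hbound : ∀ γ ∈ silDom r, γ.ord < βs := by
        intro γ hγ
        obtain ⟨tr, htrr, h1⟩ := hγ
        obtain ⟨i, hi, htri⟩ := htrr
        have h2 : γ.ord < F₀ (otio lam.ord i) := by
          rw [← h1]; exact hC1 i tr.1 ⟨tr, htri, rfl⟩
        exact lt_of_lt_of_le h2 (le_ciSup (Ordinal.bddAbove_range _) (⟨i, hi⟩ : s))
      have hinj : Function.Injective (fun γ : silDom r =>
          (ULift.up ((Ordinal.ToType.mk (o := βs)) ⟨γ.1.ord, hbound γ.1 γ.2⟩) :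
            ULift.{1} βs.ToType)) := by
        intro x y h
        have h1 := congrArg ULift.down h
        have h2 := (Ordinal.ToType.mk (o := βs)).injective h1
        have h3 : x.1.ord = y.1.ord := congrArg Subtype.val h2
        exact Subtype.ext (Cardinal.ord_injective h3)
      calc Cardinal.mk (silDom r) ≤ Cardinal.mk (ULift.{1} βs.ToType) :=
            Cardinal.mk_le_of_injective hinj
        _ = Cardinal.lift.{1} (Cardinal.mk βs.ToType) := Cardinal.mk_uLift _
        _ = Cardinal.lift.{1} βs.card := by rw [Cardinal.mk_toType]
        _ < Cardinal.lift.{1} lam := Cardinal.lift_lt.2 (Cardinal.lt_ord.1 hsupb)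
    · intro c hcreg hclam
      obtain ⟨β₀, hβ₀, hβ₀bd⟩ := (hp i₀).2.2.2.1 c hcreg hclam
      have hEach : ∀ i : {i : s // otio lam.ord i.1 < c.ord},
          ∃ β, β < c ∧ ∀ γ ∈ silDom (p i.1.1), γ < c → γ ≤ β := by
        intro i
        obtain ⟨β, h1, h2⟩ := (hp i.1.1).2.2.2.1 c hcreg hclam
        exact ⟨β, h1, h2⟩
      choose βc hβc1 hβc2 using hEach
      set so := ⨆ i, (βc i).ord with hso
      have hsoc : so < c.ord := by
        rcases le_or_gt c μ with hcμ | hμc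
        · have hemp2 : IsEmpty {i : s // otio lam.ord i.1 < c.ord} := by
            refine ⟨fun i => ?_⟩
            have hb0i : b₀ < otio lam.ord i.1.1 := ((hmemZ i.1.1 i.1.2).1.1).2.2.1
            have hco : c.ord ≤ μ.ord := Cardinal.ord_le_ord.2 hcμ
            have hcti : c.ord ≤ otio lam.ord i.1.1 := le_trans hco
              (le_trans (le_max_right κ.ord μ.ord) (le_of_lt hb0i))
            exact absurd i.2 (not_lt.2 hcti)
          rw [hso, ciSup_of_empty]
          have hbot : (⊥ : Ordinal) = 0 := rfl
          rw [hbot, Cardinal.lt_ord]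
          simpa using hcreg.pos
        · rw [hso]
          apply Ordinal.iSup_lt_ord
          · rw [hcreg.cof_eq]
            exact lt_of_le_of_lt (Cardinal.mk_subtype_le _) (lt_trans hscard hμc)
          · intro i
            exact Cardinal.ord_lt_ord.2 (hβc1 i)
      refine ⟨(max β₀.ord so).card, ?_, ?_⟩
      · exact Cardinal.lt_ord.1 (max_lt (Cardinal.ord_lt_ord.2 hβ₀) hsoc)
      · intro γ hγ hγc
        obtain ⟨tr, htrr, h1⟩ := hγ
        obtain ⟨i, hi, htri⟩ := htrr
        have hγdi : γ ∈ silDom (p i) := ⟨tr, htri, h1⟩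
        have hcard : γ = γ.ord.card := (Cardinal.card_ord γ).symm
        rcases lt_or_ge γ.ord (otio lam.ord i) with hlow | hhigh
        · have hν : γ.ord ≤ ν₁ := hC2 i hi γ hγdi hlow
          have htr0 : tr ∈ p i₀ := hC3 i hi i₀ hi₀ tr htri (by rw [h1]; exact hν)
          have h2 : γ ≤ β₀ := hβ₀bd γ ⟨tr, htr0, h1⟩ hγc
          rw [hcard]
          exact Ordinal.card_le_card (le_trans (Cardinal.ord_le_ord.2 h2) (le_max_left _ _))
        · have hio : otio lam.ord i < c.ord := lt_of_le_of_lt hhigh (Cardinal.ord_lt_ord.2 hγc)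
          have h2 : γ ≤ βc ⟨⟨i, hi⟩, hio⟩ := hβc2 ⟨⟨i, hi⟩, hio⟩ γ hγdi hγc
          have h3 : γ.ord ≤ so := by
            rw [hso]
            exact le_trans (Cardinal.ord_le_ord.2 h2)
              (le_ciSup (Ordinal.bddAbove_range _) _)
          rw [hcard]
          exact Ordinal.card_le_card (le_trans h3 (le_max_right _ _))
    · refine ⟨ξf i₀, hξf1 i₀, ?_⟩
      rintro tr ⟨i, hi, htri⟩
      have hVeq : V i = V i₀ := by rw [(hmemZ i hi).2, (hmemZ i₀ hi₀).2]
      have hsnd : en2 (ξf i) = en2 (ξf i₀) := congrArg Prod.snd hVeq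
      have hξeq : ξf i = ξf i₀ := hen2 _ (hξf1 i) _ (hξf1 i₀) hsnd
      rw [← hξeq]
      exact hξf2 i tr htri
end

section
/- (Δ-system lemma for Easton supports below a Mahlo cardinal) If λ is Mahlo and ⟨d_α : α < λ⟩ is a sequence of Easton subsets of λ each of size < λ, then there is a set Z ⊆ λ of size λ and a set r such that d_α ∩ d_β = r for all distinct α, β ∈ Z. -/
/-- A set `d` of ordinals is an Easton subset of `λ`: for every regular cardinal
`α ≤ λ`, `sup (d ∩ α) < α`. -/
def EastonO (lam : Cardinal) (d : Set Ordinal) : Prop :=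
  ∀ c : Cardinal, c.IsRegular → c ≤ lam → ∃ β < c.ord, ∀ x ∈ d, x < c.ord → x ≤ β

namespace Stmt13Aux

open Cardinal Ordinal Set

/-- the ordinal value of an element of `o.toType`. -/
noncomputable def vv (o : Ordinal.{0}) (x : o.ToType) : Ordinal :=
  (((Ordinal.ToType.mk (o := o))).symm x).1

lemma vv_lt (o : Ordinal.{0}) (x : o.ToType) : vv o x < o :=
  (((Ordinal.ToType.mk (o := o))).symm x).2

/-- the element of `o.toType` corresponding to `γ < o`. -/
noncomputable def ee (o : Ordinal.{0}) (γ : Ordinal) (h : γ < o) : o.ToType :=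
  (Ordinal.ToType.mk (o := o)) ⟨γ, h⟩

lemma vv_ee (o : Ordinal.{0}) (γ : Ordinal) (h : γ < o) : vv o (ee o γ h) = γ := by
  simp [vv, ee]

lemma ee_vv (o : Ordinal.{0}) (x : o.ToType) (h : vv o x < o) : ee o (vv o x) h = x :=
  ((Ordinal.ToType.mk (o := o))).apply_symm_apply x

lemma vv_inj {o : Ordinal.{0}} {x y : o.ToType} (h : vv o x = vv o y) : x = y := by
  have := congrArg (fun z => (Ordinal.ToType.mk (o := o)) z)
    (Subtype.ext h : ((Ordinal.ToType.mk (o := o))).symm x = ((Ordinal.ToType.mk (o := o))).symm y)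
  simpa using this

variable {lam : Cardinal.{0}}

lemma sup_lt (hreg : lam.IsRegular) {ι : Type} (f : ι → Ordinal.{0})
    (hι : #ι < lam) (hf : ∀ i, f i < lam.ord) : iSup f < lam.ord :=
  Cardinal.iSup_lt_ord_of_isRegular hreg hι hf

/-- A subset of `Iio lam.ord` of size `< lam` is strictly bounded below `lam.ord`. -/
lemma small_bdd (hreg : lam.IsRegular) (S : Set Ordinal.{0})
    (hS : S ⊆ Set.Iio lam.ord) (hsz : Cardinal.mk S < Cardinal.lift.{1} lam) :
    ∃ b < lam.ord, ∀ x ∈ S, x < b := by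
  set T : Set lam.ord.ToType := {x | vv lam.ord x ∈ S} with hT
  have hequiv : T ≃ S :=
    { toFun := fun t => ⟨vv lam.ord t.1, t.2⟩
      invFun := fun s => ⟨ee lam.ord s.1 (hS s.2), by
        show vv lam.ord _ ∈ S
        convert s.2 using 1; exact vv_ee _ _ _⟩
      left_inv := fun t => Subtype.ext (ee_vv _ _ _)
      right_inv := fun s => Subtype.ext (vv_ee _ _ _) }
  have hliftT : Cardinal.lift.{1} #T = #S := by
    have := Cardinal.lift_mk_eq'.mpr ⟨hequiv⟩
    simpa using this
  have hTsz : #T < lam := by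
    rw [← Cardinal.lift_lt.{0,1}, hliftT]; exact hsz
  have hsup : iSup (fun t : T => vv lam.ord t.1) < lam.ord :=
    sup_lt hreg _ hTsz (fun t => vv_lt _ _)
  refine ⟨iSup (fun t : T => vv lam.ord t.1) + 1,
    (Cardinal.isSuccLimit_ord hreg.aleph0_le).add_one_lt hsup, ?_⟩
  intro x hx
  have hxlt : x < lam.ord := hS hx
  have hxT : ee lam.ord x hxlt ∈ T := by
    show vv lam.ord _ ∈ S; rw [vv_ee]; exact hx
  have : x ≤ iSup (fun t : T => vv lam.ord t.1) := by
    have := Ordinal.le_iSup (fun t : T => vv lam.ord t.1) ⟨_, hxT⟩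
    simpa [vv_ee] using this
  exact lt_of_le_of_lt this (lt_add_one _)

/-- bounding a function below a given point. -/
lemma bound_below (hreg : lam.IsRegular) (g : Ordinal.{0} → Ordinal.{0})
    (hg : ∀ α < lam.ord, g α < lam.ord) (o : Ordinal) (ho : o < lam.ord) :
    ∃ b < lam.ord, ∀ α < o, g α < b := by
  have hcard : #o.ToType < lam := by
    rw [Cardinal.mk_toType]; exact Cardinal.lt_ord.mp ho
  have hf : ∀ i : o.ToType, g (vv o i) < lam.ord :=
    fun i => hg _ ((vv_lt o i).trans ho)
  have hsup : iSup (fun i : o.ToType => g (vv o i)) < lam.ord :=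
    sup_lt hreg _ hcard hf
  refine ⟨iSup (fun i : o.ToType => g (vv o i)) + 1,
    (Cardinal.isSuccLimit_ord hreg.aleph0_le).add_one_lt hsup, ?_⟩
  intro α hα
  have : g α ≤ iSup (fun i : o.ToType => g (vv o i)) := by
    have := Ordinal.le_iSup (fun i : o.ToType => g (vv o i)) (ee o α hα)
    simpa [vv_ee] using this
  exact lt_of_le_of_lt this (lt_add_one _)

/-- the closure-points set of a function `g` is club in `lam.ord`. -/
lemma club_of_fun (hreg : lam.IsRegular) (haleph : Cardinal.aleph0 < lam)
    (g : Ordinal.{0} → Ordinal.{0}) (hg : ∀ α < lam.ord, g α < lam.ord) :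
    IsClubIn {γ | γ < lam.ord ∧ ∀ α < γ, g α < γ} lam.ord := by
  have hlim : Order.IsSuccLimit lam.ord := Cardinal.isSuccLimit_ord hreg.aleph0_le
  refine ⟨fun γ hγ => hγ.1, ?_, ?_⟩
  · -- unbounded
    intro a ha
    -- step function
    have hstep : ∀ o : Ordinal, ∃ b, o < lam.ord →
        (b < lam.ord ∧ o < b ∧ ∀ α < o, g α < b) := by
      intro o
      by_cases ho : o < lam.ord
      · obtain ⟨b, hb, hbd⟩ := bound_below hreg g hg o ho
        refine ⟨max (o + 1) b, fun _ => ⟨max_lt (hlim.add_one_lt ho) hb, ?_, ?_⟩⟩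
        · exact lt_of_lt_of_le (lt_add_one o) (le_max_left _ _)
        · exact fun α hα => lt_of_lt_of_le (hbd α hα) (le_max_right _ _)
      · exact ⟨0, fun h => absurd h ho⟩
    choose step hstep using hstep
    set seq : ℕ → Ordinal := fun n => step^[n] (a + 1) with hseq
    have hseqlt : ∀ n, seq n < lam.ord := by
      intro n
      induction n with
      | zero => exact hlim.add_one_lt ha
      | succ k ih =>
        have : seq (k + 1) = step (seq k) := by
          rw [hseq]; simp [Function.iterate_succ_apply']
        rw [this]; exact (hstep _ ih).1
    have hseqsucc : ∀ n, seq (n + 1) = step (seq n) := by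
      intro n; rw [hseq]; simp [Function.iterate_succ_apply']
    have hsup : iSup seq < lam.ord := by
      apply sup_lt hreg seq _ hseqlt
      rw [Cardinal.mk_nat]; exact haleph
    refine ⟨iSup seq, ⟨hsup, ?_⟩, ?_⟩
    · intro α hα
      obtain ⟨n, hn⟩ := Ordinal.lt_iSup_iff.mp hα
      have : g α < seq (n + 1) := by
        rw [hseqsucc]; exact (hstep _ (hseqlt n)).2.2 α hn
      exact lt_of_lt_of_le this (Ordinal.le_iSup seq (n + 1))
    · have h0 : a < seq 0 := by rw [hseq]; simp
      exact lt_of_lt_of_le h0 (Ordinal.le_iSup seq 0)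
  · -- closed
    intro a ha hpos hacc
    refine ⟨ha, fun α hα => ?_⟩
    obtain ⟨c, hcC, hαc, hca⟩ := hacc α hα
    exact lt_trans (hcC.2 α hαc) hca

end Stmt13Aux

open Stmt13Aux Cardinal Ordinal Set

/-- Δ-system lemma for Easton supports below a Mahlo cardinal: if `λ` is Mahlo and
`⟨d_α : α < λ⟩` is a sequence of Easton subsets of `λ` each of size `< λ`, there are
`Z ⊆ λ` of size `λ` and a root `r` with `d_α ∩ d_β = r` for all distinct `α, β ∈ Z`. -/
theorem stmt13 (lam : Cardinal.{0}) (hM : IsMahlo lam)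
    (d : lam.ord.ToType → Set Ordinal)
    (hsub : ∀ α, d α ⊆ Set.Iio lam.ord)
    (hsize : ∀ α, Cardinal.mk (d α) < Cardinal.lift.{1} lam)
    (hE : ∀ α, EastonO lam (d α)) :
    ∃ Z : Set lam.ord.ToType, Cardinal.mk Z = lam ∧
      ∃ r : Set Ordinal, ∀ a ∈ Z, ∀ b ∈ Z, a ≠ b → d a ∩ d b = r := by
  obtain ⟨⟨haleph, hreg, hSL⟩, hMahlo⟩ := hM
  have hlim : Order.IsSuccLimit lam.ord := Cardinal.isSuccLimit_ord hreg.aleph0_le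
  -- D : Ordinal version of d
  set D : Ordinal → Set Ordinal :=
    fun γ => if h : γ < lam.ord then d (ee lam.ord γ h) else ∅ with hD
  have hDval : ∀ γ (h : γ < lam.ord), D γ = d (ee lam.ord γ h) := by
    intro γ h; rw [hD]; simp [h]
  have hDd : ∀ x : lam.ord.ToType, D (vv lam.ord x) = d x := by
    intro x
    rw [hDval _ (vv_lt _ x), ee_vv]
  -- the pressing-down function F
  have hFex : ∀ γ : Ordinal, ∃ β : Ordinal, ∀ _ : γ < lam.ord,
      ∀ _ : (∃ r : Cardinal, IsInacc r ∧ r.ord = γ),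
      β < γ ∧ ∀ x ∈ D γ, x < γ → x ≤ β := by
    intro γ
    by_cases h1 : γ < lam.ord
    · by_cases h2 : ∃ r : Cardinal, IsInacc r ∧ r.ord = γ
      · obtain ⟨r, hr, hrd⟩ := h2
        have hrlam : r ≤ lam := le_of_lt (Cardinal.ord_lt_ord.mp (hrd ▸ h1))
        obtain ⟨β, hβ, hβbd⟩ := hE (ee lam.ord γ h1) r hr.2.1 hrlam
        rw [hrd] at hβ hβbd
        refine ⟨β, fun _ _ => ⟨hβ, ?_⟩⟩
        rw [hDval _ h1]
        exact hβbd
      · exact ⟨0, fun _ h => absurd h h2⟩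
    · exact ⟨0, fun h => absurd h h1⟩
  choose F hF using hFex
  -- fibers
  set A : Ordinal → Set Ordinal := fun β =>
    {γ | γ < lam.ord ∧ (∃ r : Cardinal, IsInacc r ∧ r.ord = γ) ∧
      (∀ α < γ, ∀ x ∈ D α, x < γ) ∧ F γ ≤ β} with hA
  -- bounds on each D α
  have hDbdex : ∀ α : Ordinal, ∃ c : Ordinal, α < lam.ord →
      (c < lam.ord ∧ ∀ x ∈ D α, x < c) := by
    intro α
    by_cases h : α < lam.ord
    · obtain ⟨b, hb, hbd⟩ := small_bdd hreg (d (ee lam.ord α h))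
        (hsub _) (hsize _)
      refine ⟨b, fun _ => ⟨hb, ?_⟩⟩
      rw [hDval _ h]; exact hbd
    · exact ⟨0, fun hh => absurd hh h⟩
  choose Dbd hDbd using hDbdex
  -- Step 1 : some fiber A β is unbounded.
  have step1 : ∃ β < lam.ord, ∀ b < lam.ord, ∃ γ ∈ A β, b ≤ γ := by
    by_contra hcon
    push_neg at hcon
    have hcon' : ∀ β : Ordinal, ∃ b : Ordinal, β < lam.ord →
        (b < lam.ord ∧ ∀ γ ∈ A β, γ < b) := by
      intro β
      by_cases hβ : β < lam.ord
      · obtain ⟨b, hb1, hb2⟩ := hcon β hβ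
        exact ⟨b, fun _ => ⟨hb1, fun γ hγ => hb2 γ hγ⟩⟩
      · exact ⟨0, fun h => absurd h hβ⟩
    choose bb hbb using hcon'
    set g : Ordinal → Ordinal := fun α => max (bb α) (Dbd α) with hg
    have hglt : ∀ α < lam.ord, g α < lam.ord :=
      fun α hα => max_lt (hbb α hα).1 (hDbd α hα).1
    obtain ⟨r, hr, hrC⟩ := hMahlo _ (club_of_fun hreg haleph g hglt)
    obtain ⟨hrlt, hrcl⟩ := hrC
    have hmem : r.ord ∈ A (F r.ord) := by
      refine ⟨hrlt, ⟨r, hr, rfl⟩, ?_, le_refl _⟩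
      intro α hα x hx
      have h1 : Dbd α ≤ g α := le_max_right _ _
      have h2 : x < Dbd α := (hDbd α (hα.trans hrlt)).2 x hx
      exact lt_of_lt_of_le h2 h1 |>.trans (hrcl α hα)
    have hFlt : F r.ord < r.ord := (hF r.ord hrlt ⟨r, hr, rfl⟩).1
    have : r.ord < bb (F r.ord) := (hbb (F r.ord) (hFlt.trans hrlt)).2 _ hmem
    have : r.ord < g (F r.ord) := lt_of_lt_of_le this (le_max_left _ _)
    exact absurd (this.trans (hrcl _ hFlt)) (lt_irrefl _)
  obtain ⟨β₀, hβ₀lt, hAunbdd⟩ := step1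
  have hβ₀1lt : β₀ + 1 < lam.ord := hlim.add_one_lt hβ₀lt
  -- Step 2 : coding intersections with Iic β₀ and finding an unbounded fiber.
  set code : Ordinal → Set ((β₀ + 1 : Ordinal).ToType) :=
    fun γ => {x | vv (β₀ + 1) x ∈ D γ} with hcode
  set W : Set ((β₀ + 1 : Ordinal).ToType) → Set Ordinal :=
    fun s => {γ | γ ∈ A β₀ ∧ code γ = s} with hW
  have step2 : ∃ s, ∀ b < lam.ord, ∃ γ ∈ W s, b ≤ γ := by
    by_contra hcon
    push_neg at hcon
    have hcon' : ∀ s, ∃ b : Ordinal, b < lam.ord ∧ ∀ γ ∈ W s, γ < b := by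
      intro s
      obtain ⟨b, hb1, hb2⟩ := hcon s
      exact ⟨b, hb1, fun γ hγ => hb2 γ hγ⟩
    choose B hB1 hB2 using hcon'
    have hcard : #(Set ((β₀ + 1 : Ordinal).ToType)) < lam := by
      rw [Cardinal.mk_set, Cardinal.mk_toType]
      exact hSL.two_power_lt (Cardinal.lt_ord.mp hβ₀1lt)
    have hsup : iSup B < lam.ord := sup_lt hreg B hcard hB1
    obtain ⟨γ, hγW, hγge⟩ := hAunbdd (iSup B + 1) (hlim.add_one_lt hsup)
    have hγWs : γ ∈ W (code γ) := ⟨hγW, rfl⟩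
    have h1 : γ < B (code γ) := hB2 _ _ hγWs
    have h2 : B (code γ) ≤ iSup B := Ordinal.le_iSup B (code γ)
    have h3 : iSup B < γ := lt_of_lt_of_le (lt_add_one _) hγge
    exact absurd ((h1.trans_le h2).trans h3) (lt_irrefl _)
  obtain ⟨s₀, hs₀⟩ := step2
  -- the homogeneous set Z and the root rt
  set Z : Set lam.ord.ToType := {x | vv lam.ord x ∈ W s₀} with hZ
  set rt : Set Ordinal :=
    {x | ∃ h : x < β₀ + 1, ee (β₀ + 1) x h ∈ s₀} with hrt
  -- key: for γ ∈ W s₀, D γ ∩ Iio (β₀+1) = rt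
  have hkey : ∀ γ ∈ W s₀, D γ ∩ Set.Iio (β₀ + 1) = rt := by
    intro γ hγ
    obtain ⟨hγA, hγc⟩ := hγ
    ext x
    constructor
    · rintro ⟨hxD, hxlt⟩
      refine ⟨hxlt, ?_⟩
      have : ee (β₀ + 1) x hxlt ∈ code γ := by
        show vv (β₀ + 1) _ ∈ D γ
        convert hxD using 1; exact vv_ee _ _ _
      rwa [hγc] at this
    · rintro ⟨hxlt, hxs⟩
      rw [← hγc] at hxs
      have : vv (β₀ + 1) (ee (β₀ + 1) x hxlt) ∈ D γ := hxs
      rw [vv_ee] at this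
      exact ⟨this, hxlt⟩
  -- intersections of distinct members of W s₀
  have hinter : ∀ γ δ, γ ∈ W s₀ → δ ∈ W s₀ → γ < δ → D γ ∩ D δ = rt := by
    intro γ δ hγ hδ hlt
    have hδ2 := hδ
    obtain ⟨⟨hδlam, hδin, hδbelow, hδF⟩, _⟩ := hδ2
    have hFs := hF δ hδlam hδin
    apply Set.Subset.antisymm
    · rintro x ⟨hxγ, hxδ⟩
      have hxδ' : x < δ := hδbelow γ hlt x hxγ
      have hxβ : x ≤ F δ := hFs.2 x hxδ hxδ'
      have hxβ0 : x < β₀ + 1 := lt_of_le_of_lt (hxβ.trans hδF) (lt_add_one _)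
      rw [← hkey δ hδ]
      exact ⟨hxδ, hxβ0⟩
    · intro x hx
      have h1 : x ∈ D γ ∩ Set.Iio (β₀ + 1) := by rw [hkey γ hγ]; exact hx
      have h2 : x ∈ D δ ∩ Set.Iio (β₀ + 1) := by rw [hkey δ hδ]; exact hx
      exact ⟨h1.1, h2.1⟩
  -- cardinality of Z
  have hZle : #Z ≤ lam := by
    have := Cardinal.mk_set_le Z
    rwa [Cardinal.mk_toType, Cardinal.card_ord] at this
  have hZge : lam ≤ #Z := by
    by_contra hcon
    push_neg at hcon
    have hsup : iSup (fun x : Z => vv lam.ord x.1) < lam.ord :=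
      sup_lt hreg _ hcon (fun x => vv_lt _ _)
    obtain ⟨γ, hγW, hγge⟩ := hs₀ (iSup (fun x : Z => vv lam.ord x.1) + 1)
      (hlim.add_one_lt hsup)
    have hγlam : γ < lam.ord := hγW.1.1
    have hxZ : ee lam.ord γ hγlam ∈ Z := by
      show vv lam.ord _ ∈ W s₀; rwa [vv_ee]
    have : γ ≤ iSup (fun x : Z => vv lam.ord x.1) := by
      have := Ordinal.le_iSup (fun x : Z => vv lam.ord x.1) ⟨_, hxZ⟩
      simpa [vv_ee] using this
    exact absurd ((lt_of_lt_of_le (lt_add_one _) hγge).trans_le this) (lt_irrefl _)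
  refine ⟨Z, le_antisymm hZle hZge, rt, ?_⟩
  intro a ha b hb hab
  have hda : d a = D (vv lam.ord a) := (hDd a).symm
  have hdb : d b = D (vv lam.ord b) := (hDd b).symm
  have hne : vv lam.ord a ≠ vv lam.ord b := fun h => hab (vv_inj h)
  rcases lt_or_gt_of_ne hne with h | h
  · rw [hda, hdb]; exact hinter _ _ ha hb h
  · rw [hda, hdb, Set.inter_comm]; exact hinter _ _ hb ha h
end
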